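/- Let ω₀ > 0, a₀' > 0, γ ∈ (0,1) with γ ≠ 1. For the FO-ESO relative error Δ_fo(jω) = N₄/D₄ with N₄ = ω₀³(jω)^γ - (jω)^γ((jω)^γ + ω₀)³ + (a₀'jω + (jω)²)((jω)^{2γ} + 3ω₀(jω)^γ + 3ω₀²) and D₄ = ω₀³(jω)^γ + (a₀'jω + (jω)²)((jω)^{2γ} + 3ω₀(jω)^γ + 3ω₀²), the limit as ω → ∞ of |Δ_fo(jω)|² is 1. -/

import Mathlib

open Filter Topology

/-- The principal-branch power `(jω)^γ = ω^γ e^{iπγ/2}` for `ω > 0`. -/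
noncomputable def jpow (ω γ : ℝ) : ℂ :=
  (ω ^ γ : ℝ) * Complex.exp (Complex.I * Real.pi * γ / 2)

/-- The phase factor `e^{iπψ/2}`. -/
noncomputable def Efun (ψ : ℝ) : ℂ := Complex.exp (Complex.I * Real.pi * ψ / 2)

lemma jpow_eq (ω ψ : ℝ) : jpow ω ψ = ((ω ^ ψ : ℝ) : ℂ) * Efun ψ := rfl

lemma Efun_ne_zero (ψ : ℝ) : Efun ψ ≠ 0 := Complex.exp_ne_zero _

lemma abs_Efun (ψ : ℝ) : ‖Efun ψ‖ = 1 := by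
  rw [Efun, show (Complex.I * (Real.pi : ℂ) * (ψ : ℂ) / 2)
      = ((Real.pi * ψ / 2 : ℝ) : ℂ) * Complex.I by push_cast; ring]
  exact Complex.norm_exp_ofReal_mul_I _

/-- Auxiliary: `ω ^ c → 0` (cast to `ℂ`) as `ω → ∞`, for `c < 0`. -/
lemma aux_rpow_tendsto_zero {c : ℝ} (hc : c < 0) :
    Tendsto (fun ω : ℝ => ((ω ^ c : ℝ) : ℂ)) atTop (nhds 0) := by
  have h : Tendsto (fun ω : ℝ => ω ^ (-(-c))) atTop (nhds 0) :=
    tendsto_rpow_neg_atTop (by linarith)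
  simp only [neg_neg] at h
  have := (Complex.continuous_ofReal.tendsto 0).comp h
  exact this

/-- for `γ ∈ (0,1)`, the FO-ESO mean-square relative model error `|Δ_fo(jω)|²`
tends to `1` as `ω → ∞`. -/
theorem stmt_16 (ω₀ a γ : ℝ) (hω₀ : 0 < ω₀) (ha : 0 < a) (hγ : γ ∈ Set.Ioo (0 : ℝ) 1)
    (hγ1 : γ ≠ 1) :
    Tendsto (fun ω : ℝ =>
        (‖
          (((ω₀ : ℂ) ^ 3 * jpow ω γ - jpow ω γ * (jpow ω γ + ω₀) ^ 3
              + ((a : ℂ) * jpow ω 1 + (jpow ω 1) ^ 2)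
                * (jpow ω (2 * γ) + 3 * ω₀ * jpow ω γ + 3 * ω₀ ^ 2)) /
            ((ω₀ : ℂ) ^ 3 * jpow ω γ
              + ((a : ℂ) * jpow ω 1 + (jpow ω 1) ^ 2)
                * (jpow ω (2 * γ) + 3 * ω₀ * jpow ω γ + 3 * ω₀ ^ 2)))‖) ^ 2)
      atTop (nhds 1) := by
  obtain ⟨hγ0, hγlt⟩ := hγ
  set N : ℝ → ℂ := fun ω =>
    (ω₀ : ℂ) ^ 3 * jpow ω γ - jpow ω γ * (jpow ω γ + ω₀) ^ 3
      + ((a : ℂ) * jpow ω 1 + (jpow ω 1) ^ 2)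
        * (jpow ω (2 * γ) + 3 * ω₀ * jpow ω γ + 3 * ω₀ ^ 2) with hNdef
  set D : ℝ → ℂ := fun ω =>
    (ω₀ : ℂ) ^ 3 * jpow ω γ
      + ((a : ℂ) * jpow ω 1 + (jpow ω 1) ^ 2)
        * (jpow ω (2 * γ) + 3 * ω₀ * jpow ω γ + 3 * ω₀ ^ 2) with hDdef
  set L : ℂ := Efun 1 ^ 2 * Efun (2 * γ) with hLdef
  have hLne : L ≠ 0 := mul_ne_zero (pow_ne_zero _ (Efun_ne_zero _)) (Efun_ne_zero _)
  -- the rescaled denominator tends to L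
  have hDlim : Tendsto (fun ω : ℝ => D ω / ((ω ^ (2 + 2 * γ) : ℝ) : ℂ)) atTop (nhds L) := by
    have t1 := aux_rpow_tendsto_zero (c := γ - (2 + 2 * γ)) (by linarith)
    have t2 := aux_rpow_tendsto_zero (c := (-1 : ℝ)) (by norm_num)
    have t3 := aux_rpow_tendsto_zero (c := -γ) (by linarith)
    have t4 := aux_rpow_tendsto_zero (c := -(2 * γ)) (by linarith)
    have hg : Tendsto (fun ω : ℝ =>
        (ω₀ : ℂ) ^ 3 * Efun γ * ((ω ^ (γ - (2 + 2 * γ)) : ℝ) : ℂ)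
          + ((a : ℂ) * Efun 1 * ((ω ^ (-1 : ℝ) : ℝ) : ℂ) + Efun 1 ^ 2)
            * (Efun (2 * γ) + 3 * ω₀ * Efun γ * ((ω ^ (-γ) : ℝ) : ℂ)
                + 3 * (ω₀ : ℂ) ^ 2 * ((ω ^ (-(2 * γ)) : ℝ) : ℂ))) atTop (nhds L) := by
      have := (((tendsto_const_nhds (x := (ω₀ : ℂ) ^ 3 * Efun γ)).mul t1).add
        ((((tendsto_const_nhds (x := (a : ℂ) * Efun 1)).mul t2).add
            (tendsto_const_nhds (x := Efun 1 ^ 2))).mul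
          (((tendsto_const_nhds (x := Efun (2 * γ))).add
              ((tendsto_const_nhds (x := 3 * (ω₀ : ℂ) * Efun γ)).mul t3)).add
            ((tendsto_const_nhds (x := 3 * (ω₀ : ℂ) ^ 2)).mul t4))))
      simpa [hLdef] using this
    refine hg.congr' ?_
    filter_upwards [eventually_ge_atTop (1 : ℝ)] with ω hω
    have hω0 : (0 : ℝ) < ω := by linarith
    have hx : ((ω : ℂ)) ≠ 0 := by exact_mod_cast hω0.ne'
    have hy0 : (0 : ℝ) < ω ^ γ := Real.rpow_pos_of_pos hω0 γ
    have hy : ((ω ^ γ : ℝ) : ℂ) ≠ 0 := by exact_mod_cast hy0.ne'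
    have hA : (ω : ℝ) ^ (1 : ℝ) = ω := Real.rpow_one ω
    have hB : (ω : ℝ) ^ (2 * γ) = (ω ^ γ) ^ 2 := by
      rw [two_mul, Real.rpow_add hω0, sq]
    have hC : (ω : ℝ) ^ (2 + 2 * γ) = ω ^ 2 * (ω ^ γ) ^ 2 := by
      rw [Real.rpow_add hω0, hB, Real.rpow_two]
    have hD1 : (ω : ℝ) ^ (-1 : ℝ) = ω⁻¹ := Real.rpow_neg_one ω
    have hE : (ω : ℝ) ^ (-γ) = (ω ^ γ)⁻¹ := Real.rpow_neg hω0.le γ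
    have hF : (ω : ℝ) ^ (-(2 * γ)) = ((ω ^ γ) ^ 2)⁻¹ := by
      rw [Real.rpow_neg hω0.le, hB]
    have hG : (ω : ℝ) ^ (γ - (2 + 2 * γ)) = ω ^ γ / (ω ^ 2 * (ω ^ γ) ^ 2) := by
      rw [Real.rpow_sub hω0, hC]
    simp only [hDdef, jpow_eq, hA, hB, hC, hD1, hE, hF, hG]
    push_cast
    field_simp [hx, hy]
  -- eventually D ≠ 0
  have hDne : ∀ᶠ ω in atTop, D ω ≠ 0 := by
    filter_upwards [hDlim.eventually_ne hLne] with ω hne hzero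
    exact hne (by simp [hzero])
  -- the rescaled numerator difference tends to 0
  have hNDlim : Tendsto (fun ω : ℝ => (N ω - D ω) / ((ω ^ (2 + 2 * γ) : ℝ) : ℂ))
      atTop (nhds 0) := by
    apply squeeze_zero_norm' (a := fun ω : ℝ => (1 + ω₀) ^ 3 * ω ^ (2 * γ - 2))
    · filter_upwards [eventually_ge_atTop (1 : ℝ)] with ω hω
      have hω0 : (0 : ℝ) < ω := by linarith
      have hy0 : (0 : ℝ) < ω ^ γ := Real.rpow_pos_of_pos hω0 γ
      have hy1 : (1 : ℝ) ≤ ω ^ γ := Real.one_le_rpow hω hγ0.le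
      have hND : N ω - D ω = -(jpow ω γ * (jpow ω γ + ω₀) ^ 3) := by
        simp only [hNdef, hDdef]; ring
      have habsj : ‖jpow ω γ‖ = ω ^ γ := by
        rw [jpow_eq, norm_mul, Complex.norm_real, Real.norm_eq_abs, abs_of_pos hy0,
          abs_Efun, mul_one]
      have hbound : ‖jpow ω γ + (ω₀ : ℂ)‖ ≤ (1 + ω₀) * ω ^ γ := by
        calc ‖jpow ω γ + (ω₀ : ℂ)‖ ≤ ‖jpow ω γ‖ + ‖(ω₀ : ℂ)‖ := norm_add_le _ _
          _ = ω ^ γ + ω₀ := by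
              rw [habsj, Complex.norm_real, Real.norm_eq_abs, abs_of_pos hω₀]
          _ ≤ (1 + ω₀) * ω ^ γ := by nlinarith
      have hc0 : (0 : ℝ) < ω ^ (2 + 2 * γ) := Real.rpow_pos_of_pos hω0 _
      rw [hND, norm_div, norm_neg, norm_mul, norm_pow]
      have h1 : ‖((ω ^ (2 + 2 * γ) : ℝ) : ℂ)‖ = ω ^ (2 + 2 * γ) := by
        rw [Complex.norm_real, Real.norm_eq_abs, abs_of_pos hc0]
      rw [h1, habsj]
      have key : ω ^ γ * ((1 + ω₀) * ω ^ γ) ^ 3 / ω ^ (2 + 2 * γ)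
          = (1 + ω₀) ^ 3 * ω ^ (2 * γ - 2) := by
        have e2 : (ω : ℝ) ^ γ * ((ω : ℝ) ^ γ) ^ 3 = ω ^ (4 * γ) := by
          rw [← Real.rpow_natCast ((ω : ℝ) ^ γ) 3, ← Real.rpow_mul hω0.le,
            ← Real.rpow_add hω0]
          norm_num
          ring_nf
        have e3 : (ω : ℝ) ^ (4 * γ) / ω ^ (2 + 2 * γ) = ω ^ (2 * γ - 2) := by
          rw [← Real.rpow_sub hω0]
          ring_nf
        calc ω ^ γ * ((1 + ω₀) * ω ^ γ) ^ 3 / ω ^ (2 + 2 * γ)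
            = (1 + ω₀) ^ 3 * (ω ^ γ * (ω ^ γ) ^ 3 / ω ^ (2 + 2 * γ)) := by ring
          _ = (1 + ω₀) ^ 3 * ω ^ (2 * γ - 2) := by rw [e2, e3]
      calc ω ^ γ * ‖jpow ω γ + (ω₀ : ℂ)‖ ^ 3 / ω ^ (2 + 2 * γ)
          ≤ ω ^ γ * ((1 + ω₀) * ω ^ γ) ^ 3 / ω ^ (2 + 2 * γ) := by
            gcongr
        _ = (1 + ω₀) ^ 3 * ω ^ (2 * γ - 2) := key
    · have h5 : Tendsto (fun ω : ℝ => ω ^ (2 * γ - 2)) atTop (nhds 0) := by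
        have := tendsto_rpow_neg_atTop (show (0 : ℝ) < 2 - 2 * γ by linarith)
        simpa [show -(2 - 2 * γ) = 2 * γ - 2 by ring] using this
      simpa using tendsto_const_nhds.mul h5
  -- ratio of difference to D tends to 0
  have hr : Tendsto (fun ω : ℝ => (N ω - D ω) / D ω) atTop (nhds 0) := by
    have hlim := hNDlim.div hDlim hLne
    rw [zero_div] at hlim
    refine hlim.congr' ?_
    filter_upwards [hDne, eventually_ge_atTop (1 : ℝ)] with ω hDω hω
    have hω0 : (0 : ℝ) < ω := by linarith
    have hc : ((ω ^ (2 + 2 * γ) : ℝ) : ℂ) ≠ 0 := by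
      exact_mod_cast (Real.rpow_pos_of_pos hω0 _).ne'
    rw [Pi.div_apply, div_div_div_cancel_right₀ hc]
  -- the quotient tends to 1
  have hquot : Tendsto (fun ω : ℝ => N ω / D ω) atTop (nhds 1) := by
    have hlim := (tendsto_const_nhds (x := (1 : ℂ))).add hr
    rw [add_zero] at hlim
    refine hlim.congr' ?_
    filter_upwards [hDne] with ω hDω
    field_simp
    ring
  have final : Tendsto (fun ω : ℝ => (‖N ω / D ω‖) ^ 2) atTop (nhds 1) := by
    have := ((continuous_norm.tendsto 1).comp hquot).pow 2
    simpa using this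
  simpa [hNdef, hDdef] using final
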